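/- If binary ({0,1}-valued) random variables X_1,...,X_n satisfy 1-negative association, then they satisfy weak negative regression: for any index i with 0 < P[X_i = 1] < 1 and any monotone non-decreasing function f of the remaining variables, E[f | X_i = 1] ≤ E[f | X_i = 0]. -/

import Mathlib

open MeasureTheory ProbabilityTheory Real Finset

/-- A vector is binary if each coordinate is 0 or 1. -/
def BinaryVec {m : ℕ} (x : Fin m → ℝ) : Prop := ∀ i, x i = 0 ∨ x i = 1

/-- Monotone non-decreasing on the Boolean cube. -/
def MonoCube {m : ℕ} (f : (Fin m → ℝ) → ℝ) : Prop :=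
  ∀ x y : Fin m → ℝ, BinaryVec x → BinaryVec y → x ≤ y → f x ≤ f y

/-- Submodular on the Boolean cube: marginal gains are coordinatewise non-increasing. -/
def SubmodCube {m : ℕ} (f : (Fin m → ℝ) → ℝ) : Prop :=
  ∀ (i : Fin m) (x y : Fin m → ℝ), BinaryVec x → BinaryVec y → x ≤ y →
    f (Function.update y i 1) - f (Function.update y i 0) ≤
      f (Function.update x i 1) - f (Function.update x i 0)

/-- Supermodular on the Boolean cube: marginal gains are coordinatewise non-decreasing. -/
def SupermodCube {m : ℕ} (f : (Fin m → ℝ) → ℝ) : Prop :=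
  ∀ (i : Fin m) (x y : Fin m → ℝ), BinaryVec x → BinaryVec y → x ≤ y →
    f (Function.update x i 1) - f (Function.update x i 0) ≤
      f (Function.update y i 1) - f (Function.update y i 0)

/-- 1-negative association for binary random variables: for every coordinate `i`,
every monotone `F` depending only on coordinates `≠ i` and every monotone `G` of `X i`,
`E[F·G] ≤ E[F]·E[G]`. -/
def OneNA {Ω : Type*} [MeasurableSpace Ω] (μ : Measure Ω) {m : ℕ} (X : Fin m → Ω → ℝ) : Prop :=
  ∀ (i : Fin m) (F : (Fin m → ℝ) → ℝ) (G : ℝ → ℝ),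
    Measurable F → MonoCube F →
    (∀ x y : Fin m → ℝ, (∀ j, j ≠ i → x j = y j) → F x = F y) →
    Measurable G → Monotone G →
    ∫ ω, F (fun j => X j ω) * G (X i ω) ∂μ ≤
      (∫ ω, F (fun j => X j ω) ∂μ) * ∫ ω, G (X i ω) ∂μ

/-- For binary random variables, 1-negative association implies weak negative regression. -/
theorem oneNA_implies_wnr_binary {Ω : Type*} [MeasurableSpace Ω] (μ : Measure Ω)
    [IsProbabilityMeasure μ] {n : ℕ} (X : Fin n → Ω → ℝ) (hX : ∀ i, Measurable (X i))
    (hbin : ∀ i ω, X i ω = 0 ∨ X i ω = 1)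
    (hNA : OneNA μ X) :
    ∀ (i : Fin n), 0 < μ (X i ⁻¹' {1}) → μ (X i ⁻¹' {1}) < 1 →
      ∀ (f : (Fin n → ℝ) → ℝ), Measurable f → MonoCube f →
        (∀ x y : Fin n → ℝ, (∀ j, j ≠ i → x j = y j) → f x = f y) →
        ∫ ω, f (fun j => X j ω) ∂(μ[|X i ⁻¹' {1}]) ≤
          ∫ ω, f (fun j => X j ω) ∂(μ[|X i ⁻¹' {0}]) := by
  intro i hp1 hp2 f hfm hfmono hfdep
  set s1 := X i ⁻¹' {1} with hs1
  set s0 := X i ⁻¹' {0} with hs0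
  have hm1 : MeasurableSet s1 := hX i (measurableSet_singleton 1)
  have hm0 : MeasurableSet s0 := hX i (measurableSet_singleton 0)
  have hcompl : s0 = s1ᶜ := by
    ext ω
    rcases hbin i ω with h | h <;> simp [hs0, hs1, h]
  set F : Ω → ℝ := fun ω => f (fun j => X j ω) with hF
  have hFmeas : Measurable F := hfm.comp (measurable_pi_lambda _ fun j => hX j)
  classical
  set S : Finset (Fin n → ℝ) :=
    Finset.univ.image (fun b : Fin n → Bool => fun j => if b j then (1:ℝ) else 0) with hSdef
  have hSne : S.Nonempty := ⟨_, Finset.mem_image.2 ⟨fun _ => false, Finset.mem_univ _, rfl⟩⟩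
  have hmemS : ∀ ω, (fun j => X j ω) ∈ S := by
    intro ω
    refine Finset.mem_image.2 ⟨fun j => decide (X j ω = 1), Finset.mem_univ _, ?_⟩
    funext j
    rcases hbin j ω with h | h <;> simp [h]
  set C : ℝ := S.sup' hSne (fun x => |f x|) with hC
  have hbound : ∀ ω, ‖F ω‖ ≤ C := by
    intro ω
    rw [Real.norm_eq_abs]
    exact Finset.le_sup' (fun x => |f x|) (hmemS ω)
  have hFint : Integrable F μ :=
    ⟨hFmeas.aestronglyMeasurable,
      HasFiniteIntegral.of_bounded (C := C) (Filter.Eventually.of_forall hbound)⟩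
  have hXind : (fun ω => X i ω) = s1.indicator (fun _ => (1:ℝ)) := by
    funext ω
    rcases hbin i ω with h | h <;>
      simp [Set.indicator_apply, hs1, h]
  have hmul1 : (fun ω => F ω * X i ω) = s1.indicator F := by
    funext ω
    rcases hbin i ω with h | h <;>
      simp [Set.indicator_apply, hs1, h]
  have hA : ∫ ω, F ω * X i ω ∂μ = ∫ ω in s1, F ω ∂μ := by
    rw [hmul1, integral_indicator hm1]
  have hEX : ∫ ω, X i ω ∂μ = (μ s1).toReal := by
    rw [hXind, integral_indicator_const (1:ℝ) hm1, smul_eq_mul, mul_one]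
    rfl
  have hNAi := hNA i f id hfm hfmono hfdep measurable_id monotone_id
  simp only [id_eq] at hNAi
  rw [hA, hEX] at hNAi
  have hμ0 : μ s0 = 1 - μ s1 := by
    rw [hcompl, measure_compl hm1 (measure_ne_top μ s1), measure_univ]
  set p : ℝ := (μ s1).toReal with hpdef
  set q : ℝ := (μ s0).toReal with hqdef
  have hp : 0 < p := ENNReal.toReal_pos hp1.ne' (measure_ne_top μ s1)
  have hq0 : 0 < μ s0 := by
    rw [hμ0]
    exact tsub_pos_of_lt hp2
  have hq : 0 < q := ENNReal.toReal_pos hq0.ne' (measure_ne_top μ s0)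
  have hpq : p + q = 1 := by
    rw [hpdef, hqdef, ← ENNReal.toReal_add (measure_ne_top μ s1) (measure_ne_top μ s0)]
    rw [hcompl, measure_add_measure_compl hm1, measure_univ, ENNReal.toReal_one]
  have hsplit : ∫ ω in s1, F ω ∂μ + ∫ ω in s0, F ω ∂μ = ∫ ω, F ω ∂μ := by
    rw [hcompl]
    exact integral_add_compl hm1 hFint
  set A1 : ℝ := ∫ ω in s1, F ω ∂μ with hA1
  set A0 : ℝ := ∫ ω in s0, F ω ∂μ with hA0
  have hkey : A1 ≤ (A1 + A0) * p := by
    calc A1 ≤ (∫ ω, F ω ∂μ) * p := hNAi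
    _ = (A1 + A0) * p := by rw [← hsplit]
  have hc1 : ∫ ω, F ω ∂(μ[|s1]) = p⁻¹ * A1 := by
    rw [ProbabilityTheory.cond, integral_smul_measure, ENNReal.toReal_inv, smul_eq_mul]
  have hc0 : ∫ ω, F ω ∂(μ[|s0]) = q⁻¹ * A0 := by
    rw [ProbabilityTheory.cond, integral_smul_measure, ENNReal.toReal_inv, smul_eq_mul]
  show ∫ ω, F ω ∂(μ[|s1]) ≤ ∫ ω, F ω ∂(μ[|s0])
  rw [hc1, hc0, inv_mul_eq_div, inv_mul_eq_div, div_le_div_iff₀ hp hq]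
  have hq1 : q = 1 - p := by linarith
  rw [hq1]
  nlinarith [hkey]
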